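/- Admissible permutations solve the assignment problem: let C be a nonempty finite type, M : C → C → ℝ, and σ : C ≃ C a permutation. There exist f, g : C → ℝ with f(c) + g(d) ≤ M(c,d) for all (c,d) ∈ C × C and f(c) + g(σ(c)) = M(c,σ(c)) for all c ∈ C, if and only if σ minimizes the assignment cost: for every permutation τ : C ≃ C, ∑_{c ∈ C} M(c,σ(c)) ≤ ∑_{c ∈ C} M(c,τ(c)). -/

import Mathlib

open List Finset

namespace AssignmentAux

variable {C : Type*} [DecidableEq C]

/-- weight of a path along a list -/
def pw (w : C → C → ℝ) : List C → ℝ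
  | a :: b :: t => w a b + pw w (b :: t)
  | _ => 0

lemma pw_nil (w : C → C → ℝ) : pw w [] = 0 := rfl
lemma pw_single (w : C → C → ℝ) (a : C) : pw w [a] = 0 := rfl
lemma pw_cons_cons (w : C → C → ℝ) (a b : C) (t : List C) :
    pw w (a :: b :: t) = w a b + pw w (b :: t) := rfl

lemma pw_append (w : C → C → ℝ) (l : List C) (d : C) (m : List C) :
    pw w (l ++ d :: m) = pw w (l ++ [d]) + pw w (d :: m) := by
  induction l with
  | nil => simp [pw_single]
  | cons a l ih =>
    cases l with
    | nil => simp [pw_cons_cons, pw_single]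
    | cons b t =>
      simp only [cons_append, pw_cons_cons] at *
      rw [ih]; ring

lemma pw_concat (w : C → C → ℝ) (l : List C) (h : l ≠ []) (d : C) :
    pw w (l ++ [d]) = pw w l + w (l.getLast h) d := by
  induction l with
  | nil => exact absurd rfl h
  | cons a l ih =>
    cases l with
    | nil => simp [pw_cons_cons, pw_single, pw_nil]
    | cons b t =>
      simp only [cons_append, pw_cons_cons] at *
      have hgl : (a :: b :: t).getLast h = (b :: t).getLast (by simp) :=
        List.getLast_cons _
      rw [ih (by simp), hgl]
      ring

variable [Inhabited C]

lemma pw_eq_sum (w : C → C → ℝ) (m : List C) :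
    pw w m = ∑ i ∈ Finset.range (m.length - 1),
      w (m.getD i default) (m.getD (i + 1) default) := by
  induction m with
  | nil => simp [pw_nil]
  | cons a m ih =>
    cases m with
    | nil => simp [pw_single]
    | cons b t =>
      rw [pw_cons_cons, ih]
      have hlen : (a :: b :: t).length - 1 = ((b :: t).length - 1) + 1 := by simp
      rw [hlen, Finset.sum_range_succ']
      simp
      ring

lemma map_sum_eq (f : C → ℝ) (m : List C) :
    (m.map f).sum = ∑ i ∈ Finset.range m.length, f (m.getD i default) := by
  induction m with
  | nil => simp
  | cons a m ih =>
    rw [List.map_cons, List.sum_cons, ih]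
    rw [List.length_cons, Finset.sum_range_succ']
    simp [add_comm]

lemma cycle_sum (w : C → C → ℝ) (m : List C) (hnd : m.Nodup) (h : m ≠ []) :
    ∑ x ∈ m.toFinset, w x (m.formPerm x)
      = pw w m + w (m.getLast h) (m.head h) := by
  rw [List.sum_toFinset _ hnd, map_sum_eq]
  have hn : m.length ≠ 0 := by simpa using h
  have key : ∀ i ∈ Finset.range m.length,
      w (m.getD i default) (m.formPerm (m.getD i default))
        = w (m.getD i default) (m.getD ((i + 1) % m.length) default) := by
    intro i hi
    rw [Finset.mem_range] at hi
    rw [List.getD_eq_getElem _ _ hi,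
      List.formPerm_apply_getElem _ hnd i hi,
      List.getD_eq_getElem _ _ (Nat.mod_lt _ (Nat.pos_of_ne_zero hn))]
  rw [Finset.sum_congr rfl key]
  have hlen : m.length = (m.length - 1) + 1 := (Nat.succ_pred_eq_of_pos (Nat.pos_of_ne_zero hn)).symm
  rw [hlen, Finset.sum_range_succ, ← hlen]
  have h1 : ∀ i ∈ Finset.range (m.length - 1),
      w (m.getD i default) (m.getD ((i + 1) % m.length) default)
        = w (m.getD i default) (m.getD (i + 1) default) := by
    intro i hi
    rw [Finset.mem_range] at hi
    rw [Nat.mod_eq_of_lt (by omega)]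
  rw [Finset.sum_congr rfl h1, ← pw_eq_sum]
  congr 1
  rw [Nat.mod_self]
  rw [List.getLast_eq_getElem, List.head_eq_getElem,
    List.getD_eq_getElem _ _ (by omega), List.getD_eq_getElem _ _ (by omega)]

variable [Fintype C]

theorem exists_potential (w : C → C → ℝ)
    (H : ∀ (m : List C), m.Nodup → ∀ h : m ≠ [],
      0 ≤ pw w m + w (m.getLast h) (m.head h)) :
    ∃ g : C → ℝ, ∀ c d, g d ≤ g c + w c d := by
  set v₀ : C := default with hv₀
  set P : C → Finset ℝ := fun d =>
    ((Finset.univ : Finset {l : List C // l.Nodup}).filter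
      (fun l => l.1.head? = some v₀ ∧ l.1.getLast? = some d)).image
      (fun l => pw w l.1) with hP
  have hPne : ∀ d, (P d).Nonempty := by
    intro d
    by_cases hd : v₀ = d
    · subst hd
      exact ⟨_, Finset.mem_image_of_mem _ (Finset.mem_filter.2
        ⟨Finset.mem_univ (⟨[v₀], by simp⟩ : {l : List C // l.Nodup}), by simp⟩)⟩
    · exact ⟨_, Finset.mem_image_of_mem _ (Finset.mem_filter.2
        ⟨Finset.mem_univ (⟨[v₀, d], by simp [hd]⟩ : {l : List C // l.Nodup}), by simp⟩)⟩
  refine ⟨fun d => (P d).min' (hPne d), fun c d => ?_⟩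
  show (P d).min' (hPne d) ≤ (P c).min' (hPne c) + w c d
  -- get a path achieving the min at c
  obtain ⟨l, hl, hval⟩ := Finset.mem_image.1 ((P c).min'_mem (hPne c))
  rw [Finset.mem_filter] at hl
  have hhead := hl.2.1
  have hlast := hl.2.2
  have hlne : l.1 ≠ [] := by
    intro h; rw [h] at hhead; simp at hhead
  have hlastc : l.1.getLast hlne = c := by
    have := List.getLast?_eq_getLast (l := l.1) hlne
    rw [hlast] at this; exact (Option.some_injective _ this).symm
  have hmin_le : ∀ (p : List C), p.Nodup → p.head? = some v₀ → p.getLast? = some d →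
      (P d).min' (hPne d) ≤ pw w p := by
    intro p hpnd hph hpl
    exact Finset.min'_le _ _ (Finset.mem_image_of_mem _
      (Finset.mem_filter.2
        ⟨Finset.mem_univ (⟨p, hpnd⟩ : {l : List C // l.Nodup}), hph, hpl⟩))
  by_cases hd : d ∈ l.1
  · obtain ⟨l₁, l₂, hsplit⟩ := List.append_of_mem hd
    have hsplit' : l.1 = (l₁ ++ [d]) ++ l₂ := by rw [hsplit]; simp
    have hpnd : (l₁ ++ [d]).Nodup := by
      have := l.2; rw [hsplit'] at this; exact this.of_append_left
    have hmnd : (d :: l₂).Nodup := by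
      have := l.2; rw [hsplit] at this; exact this.of_append_right
    have hph : (l₁ ++ [d]).head? = some v₀ := by
      cases l₁ with
      | nil =>
        rw [hsplit] at hhead; simpa using hhead
      | cons a t =>
        rw [hsplit] at hhead; simpa using hhead
    have hmlast : (d :: l₂).getLast (by simp) = c := by
      have h1 : l.1.getLast? = (d :: l₂).getLast? := by
        rw [hsplit]; exact List.getLast?_append_of_ne_nil _ (by simp)
      rw [hlast] at h1
      have := List.getLast?_eq_getLast (l := d :: l₂) (by simp)
      rw [← h1] at this
      exact (Option.some_injective _ this).symm
    have hHm := H (d :: l₂) hmnd (by simp)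
    rw [hmlast] at hHm
    simp only [List.head_cons] at hHm
    have hpwsplit : pw w l.1 = pw w (l₁ ++ [d]) + pw w (d :: l₂) := by
      rw [hsplit]; exact pw_append w l₁ d l₂
    have hle := hmin_le (l₁ ++ [d]) hpnd hph List.getLast?_concat
    have : (P c).min' (hPne c) = pw w l.1 := hval.symm
    rw [this, hpwsplit]
    linarith
  · have hpnd : (l.1 ++ [d]).Nodup := by
      rw [List.nodup_append]
      exact ⟨l.2, by simp, by simpa using fun a (ha : a ∈ l.1) (h : a = d) => hd (h ▸ ha)⟩
    have hph : (l.1 ++ [d]).head? = some v₀ := by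
      cases hl1 : l.1 with
      | nil => exact absurd hl1 hlne
      | cons a t =>
        rw [hl1] at hhead
        simpa using hhead
    have hle := hmin_le (l.1 ++ [d]) hpnd hph List.getLast?_concat
    rw [pw_concat w l.1 hlne d, hlastc] at hle
    have : (P c).min' (hPne c) = pw w l.1 := hval.symm
    linarith

end AssignmentAux

/-- Admissible permutations solve the assignment problem: the permutation
graph `Γ_σ` is admissible (its witness polyhedron is nonempty) iff `σ`
minimizes the assignment cost `∑ c, M c (σ c)`. -/
theorem admissible_iff_optimal {C : Type*} [Fintype C] [Nonempty C]
    (M : C → C → ℝ) (σ : Equiv.Perm C) :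
    (∃ f g : C → ℝ, (∀ c d, f c + g d ≤ M c d) ∧ (∀ c, f c + g (σ c) = M c (σ c))) ↔
      ∀ τ : Equiv.Perm C, ∑ c, M c (σ c) ≤ ∑ c, M c (τ c) := by
  constructor
  · rintro ⟨f, g, hle, heq⟩ τ
    have h1 : ∑ c, M c (σ c) = ∑ c, f c + ∑ c, g c := by
      rw [← Equiv.sum_comp σ g, ← Finset.sum_add_distrib]
      exact Finset.sum_congr rfl fun c _ => (heq c).symm
    have h2 : ∑ c, f c + ∑ c, g c ≤ ∑ c, M c (τ c) := by
      rw [← Equiv.sum_comp τ g, ← Finset.sum_add_distrib]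
      exact Finset.sum_le_sum fun c _ => hle c (τ c)
    linarith
  · intro hopt
    letI := Classical.decEq C
    letI : Inhabited C := Classical.inhabited_of_nonempty ‹_›
    set N : C → C → ℝ := fun c d => M c (σ d) with hN
    have hNopt : ∀ τ : Equiv.Perm C, ∑ c, N c c ≤ ∑ c, N c (τ c) := by
      intro τ
      simpa [hN, Equiv.Perm.mul_apply] using hopt (σ * τ)
    set w : C → C → ℝ := fun c d => N c d - N c c with hw
    have H : ∀ (m : List C), m.Nodup → ∀ h : m ≠ [],
        0 ≤ AssignmentAux.pw w m + w (m.getLast h) (m.head h) := by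
      intro m hnd h
      rw [← AssignmentAux.cycle_sum w m hnd h]
      have hext : ∑ x ∈ m.toFinset, w x (m.formPerm x)
          = ∑ x, w x (m.formPerm x) := by
        refine Finset.sum_subset (Finset.subset_univ _) ?_
        intro x _ hx
        rw [List.formPerm_apply_of_notMem (by simpa using hx)]
        simp [hw]
      rw [hext]
      have hsplit : ∑ x, w x (m.formPerm x)
          = ∑ x, N x (m.formPerm x) - ∑ x, N x x := by
        simp only [hw, Finset.sum_sub_distrib]
      rw [hsplit, sub_nonneg]
      exact hNopt m.formPerm
    obtain ⟨g, hg⟩ := AssignmentAux.exists_potential w H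
    refine ⟨fun c => N c c - g c, fun d => g (σ.symm d), fun c d => ?_, fun c => ?_⟩
    · have h1 := hg c (σ.symm d)
      have hNd : N c (σ.symm d) = M c d := by simp [hN]
      simp only [hw] at h1
      show N c c - g c + g (σ.symm d) ≤ M c d
      linarith
    · simp [hN]
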